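/- Let n, ℓ ∈ ℕ, let v ∈ ℤ with gcd(v, ℓ) = 1 and let v̄ be an inverse of v modulo ℓ. Let r1, r2, d ∈ ℂ with Re(r1) > 0, Re(r2) > 0 and Re(d) > 0. Then the function 𝓔(s) has a simple pole at s = 0, and lim_{s→0} s·𝓔(s) = −[Γ(d+1)/Γ(d + r1 + r2 + 1)]·(2π√n)^{r1+r2−1}·ℓ^{−r2}·ζ(1 − r1), where ζ is the Riemann zeta function. -/

import Mathlib

open Real Filter Topology HurwitzZeta

noncomputable section

/-- The Estermann zeta function `E(s; v/ℓ, a)`, defined as a meromorphic function of `s` via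
Hurwitz zeta functions. -/
def Est (a : ℂ) (ℓ : ℕ) (v : ℤ) (s : ℂ) : ℂ :=
  (ℓ : ℂ) ^ (a - 2 * s) *
    ∑ m1 ∈ Finset.Icc 1 ℓ, ∑ m2 ∈ Finset.Icc 1 ℓ,
      Complex.exp (2 * (π : ℂ) * Complex.I * v * m1 * m2 / ℓ) *
        hurwitzZeta (((m1 : ℝ) / (ℓ : ℝ) : ℝ) : UnitAddCircle) (s - a) *
        hurwitzZeta (((m2 : ℝ) / (ℓ : ℝ) : ℝ) : UnitAddCircle) s

/-- `𝓔(s) = [Γ(d−s+1)/Γ(d+s+r1+r2+1)]·(2π√n/ℓ)^{2s+r1+r2−1}·E(1−s−r1; −v̄/ℓ, −r1)`. -/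
def calE (n ℓ : ℕ) (vbar : ℤ) (r1 r2 d : ℂ) (s : ℂ) : ℂ :=
  Complex.Gamma (d - s + 1) / Complex.Gamma (d + s + r1 + r2 + 1) *
    ((2 * π * Real.sqrt n / (ℓ : ℝ) : ℝ) : ℂ) ^ (2 * s + r1 + r2 - 1) *
    Est (-r1) ℓ (-vbar) (1 - s - r1)



lemma geom_aux (ℓ : ℕ) (hℓ : 0 < ℓ) (c : ℤ) :
    ∑ m ∈ Finset.Icc 1 ℓ, Complex.exp (2 * (π : ℂ) * Complex.I * c * m / ℓ) =
      if (ℓ : ℤ) ∣ c then (ℓ : ℂ) else 0 := by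
  have hℓ0 : (ℓ : ℂ) ≠ 0 := Nat.cast_ne_zero.2 hℓ.ne'
  set z : ℂ := Complex.exp (2 * (π : ℂ) * Complex.I * c / ℓ) with hz
  have hzm : ∀ m : ℕ, Complex.exp (2 * (π : ℂ) * Complex.I * c * m / ℓ) = z ^ m := by
    intro m
    rw [hz, ← Complex.exp_nat_mul]
    ring_nf
  have hzl : z ^ ℓ = 1 := by
    rw [hz, ← Complex.exp_nat_mul]
    rw [show (ℓ : ℂ) * (2 * (π : ℂ) * Complex.I * c / ℓ) = c * (2 * π * Complex.I) by
      field_simp]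
    exact Complex.exp_int_mul_two_pi_mul_I c
  have hz1 : z = 1 ↔ (ℓ : ℤ) ∣ c := by
    rw [hz, Complex.exp_eq_one_iff]
    constructor
    · rintro ⟨k, hk⟩
      have h2 : (2 * (π : ℂ) * Complex.I) ≠ 0 := by
        simp [Real.pi_ne_zero, Complex.I_ne_zero, Complex.ofReal_ne_zero]
      have h3 : (2 * (π : ℂ) * Complex.I) * c = (2 * (π : ℂ) * Complex.I) * (k * ℓ) := by
        field_simp at hk
        linear_combination (2 * (π : ℂ) * Complex.I) * hk
      have h4 : (c : ℂ) = (k : ℂ) * ℓ := mul_left_cancel₀ h2 h3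
      have : c = k * (ℓ:ℤ) := by exact_mod_cast h4
      exact ⟨k, by rw [this, mul_comm]⟩
    · rintro ⟨k, hk⟩
      exact ⟨k, by rw [hk]; push_cast; field_simp⟩
  simp_rw [hzm]
  by_cases h : z = 1
  · simp [h, hz1.1 h, Nat.card_Icc]
  · rw [if_neg (fun hd => h (hz1.2 hd))]
    rw [← Finset.Ico_add_one_right_eq_Icc, Finset.sum_Ico_eq_sum_range]
    norm_num
    have : ∀ i ∈ Finset.range ℓ, z ^ (1 + i) = z * z ^ i := fun i _ => by rw [pow_add, pow_one]
    rw [Finset.sum_congr rfl this, ← Finset.mul_sum, geom_sum_eq h, hzl]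
    simp

lemma sum_eval (ℓ : ℕ) (hℓ : 0 < ℓ) (vbar : ℤ) (hco : IsCoprime (ℓ : ℤ) vbar) (w : ℂ) :
    ∑ m1 ∈ Finset.Icc 1 ℓ, ∑ m2 ∈ Finset.Icc 1 ℓ,
      Complex.exp (2 * (π : ℂ) * Complex.I * (-vbar : ℤ) * m1 * m2 / ℓ) * (-1) *
        hurwitzZeta (((m2 : ℝ) / (ℓ : ℝ) : ℝ) : UnitAddCircle) w
      = -(ℓ : ℂ) * riemannZeta w := by
  rw [Finset.sum_comm]
  have step : ∀ m2 ∈ Finset.Icc 1 ℓ,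
      ∑ m1 ∈ Finset.Icc 1 ℓ,
        Complex.exp (2 * (π : ℂ) * Complex.I * (-vbar : ℤ) * m1 * m2 / ℓ) * (-1) *
          hurwitzZeta (((m2 : ℝ) / (ℓ : ℝ) : ℝ) : UnitAddCircle) w
      = (if (ℓ : ℤ) ∣ (-vbar * m2) then (ℓ : ℂ) else 0) *
          ((-1) * hurwitzZeta (((m2 : ℝ) / (ℓ : ℝ) : ℝ) : UnitAddCircle) w) := by
    intro m2 _
    rw [← geom_aux ℓ hℓ (-vbar * m2), Finset.sum_mul]
    refine Finset.sum_congr rfl fun m1 _ => ?_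
    rw [show ((-vbar * (m2:ℤ) : ℤ) : ℂ) = -(vbar:ℂ) * (m2:ℕ) by push_cast; ring]
    push_cast
    ring
  rw [Finset.sum_congr rfl step]
  have hdvd : ∀ m2 ∈ Finset.Icc 1 ℓ, ((ℓ : ℤ) ∣ (-vbar * m2)) ↔ m2 = ℓ := by
    intro m2 hm2
    simp only [Finset.mem_Icc] at hm2
    constructor
    · intro h
      rw [show -vbar * (m2:ℤ) = -(vbar * m2) by ring, dvd_neg] at h
      have h2 : (ℓ : ℤ) ∣ (m2 : ℤ) := hco.dvd_of_dvd_mul_left h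
      have h3 : ℓ ∣ m2 := by exact_mod_cast h2
      exact le_antisymm hm2.2 (Nat.le_of_dvd (by omega) h3)
    · rintro rfl; exact ⟨-vbar, by ring⟩
  have : ∀ m2 ∈ Finset.Icc 1 ℓ,
      (if (ℓ : ℤ) ∣ (-vbar * m2) then (ℓ : ℂ) else 0) *
          ((-1) * hurwitzZeta (((m2 : ℝ) / (ℓ : ℝ) : ℝ) : UnitAddCircle) w)
      = if m2 = ℓ then (ℓ : ℂ) * ((-1) * hurwitzZeta (((m2 : ℝ) / (ℓ : ℝ) : ℝ) : UnitAddCircle) w) else 0 := by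
    intro m2 hm2
    rw [if_congr (hdvd m2 hm2) rfl rfl]
    split <;> simp
  rw [Finset.sum_congr rfl this, Finset.sum_ite_eq' (Finset.Icc 1 ℓ) ℓ]
  rw [if_pos (Finset.mem_Icc.2 ⟨hℓ, le_refl ℓ⟩)]
  have hx : ((((ℓ:ℕ) : ℝ) / ((ℓ:ℕ) : ℝ) : ℝ) : UnitAddCircle) = (0 : UnitAddCircle) := by
    rw [div_self (Nat.cast_ne_zero.2 hℓ.ne' : ((ℓ:ℕ):ℝ) ≠ 0)]
    exact AddCircle.coe_period 1
  rw [hx, hurwitzZeta_zero]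
  ring

lemma pole_aux (x : UnitAddCircle) :
    Tendsto (fun s : ℂ => s * hurwitzZeta x (1 - s)) (𝓝[≠] 0) (𝓝 (-1)) := by
  have h1 : Tendsto (fun s : ℂ => 1 - s) (𝓝[≠] (0:ℂ)) (𝓝[≠] (1:ℂ)) := by
    refine tendsto_nhdsWithin_of_tendsto_nhds_of_eventually_within _ ?_ ?_
    · have : Tendsto (fun s : ℂ => 1 - s) (𝓝 0) (𝓝 (1 - 0)) :=
        (continuous_const.sub continuous_id).tendsto 0
      simpa using this.mono_left nhdsWithin_le_nhds
    · filter_upwards [self_mem_nhdsWithin] with s hs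
      simp only [Set.mem_compl_iff, Set.mem_singleton_iff] at hs ⊢
      intro h
      exact hs (by linear_combination -h)
  have h2 := (hurwitzZeta_residue_one x).comp h1
  have h3 := h2.neg
  rw [show -(1:ℂ) = -1 from rfl] at h3
  refine h3.congr fun s => ?_
  simp only [Function.comp]
  ring

lemma est_limit (ℓ : ℕ) (hℓ : 0 < ℓ) (vbar : ℤ) (hco : IsCoprime (ℓ : ℤ) vbar)
    (r1 : ℂ) (hr1 : r1 ≠ 0) :
    Tendsto (fun s : ℂ => s * Est (-r1) ℓ (-vbar) (1 - s - r1)) (𝓝[≠] 0)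
      (𝓝 (-(ℓ : ℂ) ^ (r1 - 1) * riemannZeta (1 - r1))) := by
  have hℓ0 : (ℓ : ℂ) ≠ 0 := Nat.cast_ne_zero.2 hℓ.ne'
  have key : ∀ s : ℂ, s * Est (-r1) ℓ (-vbar) (1 - s - r1) =
      (ℓ : ℂ) ^ (r1 - 2 + 2 * s) *
        ∑ m1 ∈ Finset.Icc 1 ℓ, ∑ m2 ∈ Finset.Icc 1 ℓ,
          Complex.exp (2 * (π : ℂ) * Complex.I * (-vbar : ℤ) * m1 * m2 / ℓ) *
            (s * hurwitzZeta (((m1 : ℝ) / (ℓ : ℝ) : ℝ) : UnitAddCircle) (1 - s)) *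
            hurwitzZeta (((m2 : ℝ) / (ℓ : ℝ) : ℝ) : UnitAddCircle) (1 - s - r1) := by
    intro s
    unfold Est
    rw [show (-r1) - 2 * (1 - s - r1) = r1 - 2 + 2 * s by ring,
        show (1 - s - r1) - (-r1) = 1 - s by ring, mul_left_comm]
    congr 1
    rw [Finset.mul_sum]
    refine Finset.sum_congr rfl fun m1 _ => ?_
    rw [Finset.mul_sum]
    refine Finset.sum_congr rfl fun m2 _ => ?_
    ring
  simp only [key]
  have hA : Tendsto (fun s : ℂ => (ℓ : ℂ) ^ (r1 - 2 + 2 * s)) (𝓝[≠] (0:ℂ))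
      (𝓝 ((ℓ : ℂ) ^ (r1 - 2))) := by
    have hc : ContinuousAt (fun s : ℂ => (ℓ : ℂ) ^ (r1 - 2 + 2 * s)) 0 :=
      (continuousAt_const_cpow hℓ0).comp (by fun_prop)
    have h := hc.tendsto.mono_left (nhdsWithin_le_nhds (s := {(0:ℂ)}ᶜ))
    simpa using h
  have hsum : Tendsto (fun s : ℂ =>
      ∑ m1 ∈ Finset.Icc 1 ℓ, ∑ m2 ∈ Finset.Icc 1 ℓ,
        Complex.exp (2 * (π : ℂ) * Complex.I * (-vbar : ℤ) * m1 * m2 / ℓ) *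
          (s * hurwitzZeta (((m1 : ℝ) / (ℓ : ℝ) : ℝ) : UnitAddCircle) (1 - s)) *
          hurwitzZeta (((m2 : ℝ) / (ℓ : ℝ) : ℝ) : UnitAddCircle) (1 - s - r1)) (𝓝[≠] (0:ℂ))
      (𝓝 (∑ m1 ∈ Finset.Icc 1 ℓ, ∑ m2 ∈ Finset.Icc 1 ℓ,
        Complex.exp (2 * (π : ℂ) * Complex.I * (-vbar : ℤ) * m1 * m2 / ℓ) * (-1) *
          hurwitzZeta (((m2 : ℝ) / (ℓ : ℝ) : ℝ) : UnitAddCircle) (1 - r1))) := by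
    refine tendsto_finset_sum _ fun m1 _ => tendsto_finset_sum _ fun m2 _ => ?_
    refine (tendsto_const_nhds.mul (pole_aux _)).mul ?_
    have hne : (1 : ℂ) - r1 ≠ 1 := fun h => hr1 (by linear_combination -h)
    have hcont := (differentiableAt_hurwitzZeta
      (((m2 : ℝ) / (ℓ : ℝ) : ℝ) : UnitAddCircle) hne).continuousAt
    have harg : Tendsto (fun s : ℂ => 1 - s - r1) (𝓝 0) (𝓝 (1 - r1)) :=
      (by fun_prop : Continuous fun s : ℂ => 1 - s - r1).tendsto' 0 (1 - r1) (by ring)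
    exact (hcont.tendsto.comp harg).mono_left nhdsWithin_le_nhds
  have := hA.mul hsum
  rw [sum_eval ℓ hℓ vbar hco (1 - r1)] at this
  refine this.congr' (EventuallyEq.refl _ _) |>.mono_right (le_of_eq ?_)
  congr 1
  rw [show r1 - 1 = (r1 - 2) + 1 by ring, Complex.cpow_add _ _ hℓ0, Complex.cpow_one]
  ring


/-- Residue of `𝓔` at the simple pole `s = 0`. -/
theorem calE_residue_at_zero
    (n ℓ : ℕ) (hn : 0 < n) (hℓ : 0 < ℓ)
    (v : ℤ) (hv : Int.gcd v ℓ = 1) (vbar : ℤ) (hvbar : v * vbar ≡ 1 [ZMOD (ℓ : ℤ)])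
    (r1 r2 d : ℂ) (hr1 : 0 < r1.re) (hr2 : 0 < r2.re) (hd : 0 < d.re) :
    Tendsto (fun s : ℂ => s * calE n ℓ vbar r1 r2 d s) (𝓝[≠] 0)
      (𝓝 (-(Complex.Gamma (d + 1) / Complex.Gamma (d + r1 + r2 + 1)) *
        ((2 * π * Real.sqrt n : ℝ) : ℂ) ^ (r1 + r2 - 1) * (ℓ : ℂ) ^ (-r2) *
        riemannZeta (1 - r1))) := by
  have hℓ0 : ((ℓ:ℕ) : ℂ) ≠ 0 := Nat.cast_ne_zero.2 hℓ.ne'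
  -- coprimality
  have hco : IsCoprime ((ℓ:ℕ) : ℤ) vbar := by
    have hdvd : ((ℓ:ℕ) : ℤ) ∣ 1 - v * vbar := (Int.ModEq.dvd hvbar)
    obtain ⟨k, hk⟩ := hdvd
    exact ⟨k, v, by linarith⟩
  have hr1ne : r1 ≠ 0 := fun h => by simp [h] at hr1
  -- the positive real constant
  set cR : ℝ := 2 * π * Real.sqrt n / (ℓ : ℝ) with hcR
  have hcpos : 0 < cR := by
    apply div_pos _ (Nat.cast_pos.2 hℓ)
    positivity
  have hc0 : ((cR : ℝ) : ℂ) ≠ 0 := Complex.ofReal_ne_zero.2 hcpos.ne'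
  -- continuous factor
  have hF : Tendsto (fun s : ℂ => Complex.Gamma (d - s + 1) / Complex.Gamma (d + s + r1 + r2 + 1) *
      ((cR : ℝ) : ℂ) ^ (2 * s + r1 + r2 - 1)) (𝓝 (0:ℂ))
      (𝓝 (Complex.Gamma (d + 1) / Complex.Gamma (d + r1 + r2 + 1) *
        ((cR : ℝ) : ℂ) ^ (r1 + r2 - 1))) := by
    have hnum : Tendsto (fun s : ℂ => Complex.Gamma (d - s + 1)) (𝓝 0) (𝓝 (Complex.Gamma (d + 1))) := by
      have hG : ContinuousAt Complex.Gamma (d + 1) := by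
        refine (Complex.differentiableAt_Gamma _ fun m => ?_).continuousAt
        intro h
        have : (d + 1).re = (-(m:ℂ)).re := by rw [h]
        simp only [Complex.add_re, Complex.one_re, Complex.neg_re, Complex.natCast_re] at this
        have : (0:ℝ) ≤ m := Nat.cast_nonneg m
        linarith [hd]
      exact hG.tendsto.comp ((by fun_prop : Continuous fun s : ℂ => d - s + 1).tendsto' 0 (d + 1) (by ring))
    have hden : Tendsto (fun s : ℂ => Complex.Gamma (d + s + r1 + r2 + 1)) (𝓝 0)
        (𝓝 (Complex.Gamma (d + r1 + r2 + 1))) := by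
      have hG : ContinuousAt Complex.Gamma (d + r1 + r2 + 1) := by
        refine (Complex.differentiableAt_Gamma _ fun m => ?_).continuousAt
        intro h
        have : (d + r1 + r2 + 1).re = (-(m:ℂ)).re := by rw [h]
        simp only [Complex.add_re, Complex.one_re, Complex.neg_re, Complex.natCast_re] at this
        have : (0:ℝ) ≤ m := Nat.cast_nonneg m
        linarith [hd, hr1, hr2]
      exact hG.tendsto.comp ((by fun_prop : Continuous fun s : ℂ => d + s + r1 + r2 + 1).tendsto' 0
        (d + r1 + r2 + 1) (by ring))
    have hdenne : Complex.Gamma (d + r1 + r2 + 1) ≠ 0 := by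
      apply Complex.Gamma_ne_zero_of_re_pos
      simp only [Complex.add_re, Complex.one_re]
      linarith [hd, hr1, hr2]
    have hpow : Tendsto (fun s : ℂ => ((cR : ℝ) : ℂ) ^ (2 * s + r1 + r2 - 1)) (𝓝 0)
        (𝓝 (((cR : ℝ) : ℂ) ^ (r1 + r2 - 1))) := by
      have hc : ContinuousAt (fun s : ℂ => ((cR : ℝ) : ℂ) ^ (2 * s + r1 + r2 - 1)) 0 :=
        (continuousAt_const_cpow hc0).comp (by fun_prop)
      have h := hc.tendsto
      simpa [show 2 * (0:ℂ) + r1 + r2 - 1 = r1 + r2 - 1 by ring] using h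
    exact (hnum.div hden hdenne).mul hpow
  -- combine
  have heq : ∀ s : ℂ, s * calE n ℓ vbar r1 r2 d s =
      (Complex.Gamma (d - s + 1) / Complex.Gamma (d + s + r1 + r2 + 1) *
        ((cR : ℝ) : ℂ) ^ (2 * s + r1 + r2 - 1)) * (s * Est (-r1) ℓ (-vbar) (1 - s - r1)) := by
    intro s; unfold calE; rw [hcR]; ring
  simp only [heq]
  have hmain := (hF.mono_left nhdsWithin_le_nhds).mul (est_limit ℓ hℓ vbar hco r1 hr1ne)
  -- identify the limit value
  have hval : Complex.Gamma (d + 1) / Complex.Gamma (d + r1 + r2 + 1) *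
      ((cR : ℝ) : ℂ) ^ (r1 + r2 - 1) * (-((ℓ:ℕ) : ℂ) ^ (r1 - 1) * riemannZeta (1 - r1)) =
      -(Complex.Gamma (d + 1) / Complex.Gamma (d + r1 + r2 + 1)) *
        ((2 * π * Real.sqrt n : ℝ) : ℂ) ^ (r1 + r2 - 1) * ((ℓ:ℕ) : ℂ) ^ (-r2) *
        riemannZeta (1 - r1) := by
    have hb : (0:ℝ) ≤ 2 * π * Real.sqrt n := by positivity
    have hsplit : ((cR : ℝ) : ℂ) ^ (r1 + r2 - 1) =
        ((2 * π * Real.sqrt n : ℝ) : ℂ) ^ (r1 + r2 - 1) * ((ℓ:ℕ) : ℂ) ^ (-(r1 + r2 - 1)) := by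
      rw [hcR, div_eq_mul_inv, Complex.ofReal_mul, Complex.mul_cpow_ofReal_nonneg hb (by positivity)]
      congr 1
      rw [Complex.ofReal_inv, Complex.ofReal_natCast,
        Complex.inv_cpow _ _ (by rw [Complex.natCast_arg]; exact Real.pi_ne_zero.symm),
        ← Complex.cpow_neg]
    have hpow : ((ℓ:ℕ) : ℂ) ^ (r1 - 1) * ((ℓ:ℕ) : ℂ) ^ (-(r1 + r2 - 1)) = ((ℓ:ℕ) : ℂ) ^ (-r2) := by
      rw [← Complex.cpow_add _ _ hℓ0, show r1 - 1 + -(r1 + r2 - 1) = -r2 by ring]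
    rw [hsplit]
    linear_combination (-(Complex.Gamma (d + 1) / Complex.Gamma (d + r1 + r2 + 1)) *
      ((2 * π * Real.sqrt n : ℝ) : ℂ) ^ (r1 + r2 - 1) * riemannZeta (1 - r1)) * hpow
  rw [hval] at hmain
  exact hmain


end
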